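/- If {i,j,k} is a 3-edge cut set of a connected graph G and {i,j,k} ⊆ I, then the Dodgson polynomial Ψ^{I,J}_{G,K} = 0. Consequently, if {i,j} ⊆ I and k ∉ I ∪ J ∪ K, then Ψ^{I,J}_{G,K} is independent of the variable a_k. -/

import Mathlib

open Finset

/-- Two vertices are joined by some edge in `S` (edges given by `head`/`tail` maps). -/
def MGAdj {V E : Type*} (head tail : E → V) (S : Set E) (a b : V) : Prop :=
  ∃ e ∈ S, (head e = a ∧ tail e = b) ∨ (head e = b ∧ tail e = a)

/-- Reachability using only edges in `S`. -/
def MGReach {V E : Type*} (head tail : E → V) (S : Set E) : V → V → Prop :=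
  Relation.ReflTransGen (MGAdj head tail S)

/-- Number of connected components of the graph on all of `V` with edge set `S`. -/
noncomputable def MGncomp {V E : Type*} (head tail : E → V) (S : Set E) : ℕ :=
  Nat.card (Quotient (Relation.EqvGen.setoid (MGAdj head tail S)))

/-- Degree of a vertex (loops counted twice). -/
def MGdeg {V E : Type*} [Fintype E] [DecidableEq V] (head tail : E → V) (v : V) : ℕ :=
  ∑ e : E, ((if head e = v then 1 else 0) + (if tail e = v then 1 else 0))

open scoped Classical

/-- The reduced oriented incidence matrix: the row of the vertex `v₀` removed. -/
noncomputable def redInc {V E : Type*} [DecidableEq V] (R : Type*) [CommRing R]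
    (head tail : E → V) (v₀ : V) : Matrix {u : V // u ≠ v₀} E R :=
  Matrix.of fun u e => (if head e = u.1 then 1 else 0) - (if tail e = u.1 then 1 else 0)

/-- The expanded Laplacian-type matrix `M = [[Λ, Ẽᵀ],[−Ẽ, 0]]` with `Λ` the diagonal
matrix of edge variables and `Ẽ` the reduced oriented incidence matrix. -/
noncomputable def bigM {V E : Type*} [Fintype V] [Fintype E] [DecidableEq V]
    (head tail : E → V) (v₀ : V) :
    Matrix (E ⊕ {u : V // u ≠ v₀}) (E ⊕ {u : V // u ≠ v₀}) (MvPolynomial E ℚ) :=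
  Matrix.fromBlocks (Matrix.diagonal fun e => MvPolynomial.X e)
    (redInc _ head tail v₀).transpose (-(redInc _ head tail v₀)) 0

/-- A bijection between the complements of two equinumerous finsets. -/
noncomputable def notMemEquiv {E : Type*} [Fintype E] [DecidableEq E] (I J : Finset E)
    (h : I.card = J.card) : {e : E // e ∉ I} ≃ {e : E // e ∉ J} :=
  Fintype.equivOfCardEq (by
    rw [Fintype.card_subtype_compl, Fintype.card_subtype_compl,
      Fintype.card_coe, Fintype.card_coe, h])

/-- The Dodgson polynomial `Ψ^{I,J}_{G,K}`: the determinant of `M` with the rows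
indexed by `I` and the columns indexed by `J` (among the edge rows/columns) removed,
with the variables `a_i`, `i ∈ K`, set to `0`. -/
noncomputable def dodgson {V E : Type*} [Fintype V] [Fintype E] [DecidableEq V]
    [DecidableEq E] (head tail : E → V) (v₀ : V) (I J K : Finset E)
    (h : I.card = J.card) : MvPolynomial E ℚ :=
  MvPolynomial.bind₁ (fun i => if i ∈ K then 0 else MvPolynomial.X i)
    (Matrix.det (Matrix.of
      fun (r c : {e : E // e ∉ I} ⊕ {u : V // u ≠ v₀}) =>
        bigM head tail v₀ (Sum.map Subtype.val id r)
          (Sum.map (fun x => ((notMemEquiv I J h x : {e : E // e ∉ J}) : E)) id c)))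

lemma keyDetZero {V E : Type*} [Fintype V] [DecidableEq V] [DecidableEq E] {head tail : E → V} {v₀ : V}
    {S : Set E} (hcut : ¬ ∀ u w : V, MGReach head tail Sᶜ u w)
    {α : Type*} [Fintype α] [DecidableEq α]
    (A : Matrix (α ⊕ {u : V // u ≠ v₀}) (α ⊕ {u : V // u ≠ v₀}) (MvPolynomial E ℚ))
    (hrow : ∀ a : α, (∀ u, A (Sum.inl a) (Sum.inr u) = 0) ∨
      ∃ e ∉ S, ∀ u : {u : V // u ≠ v₀},
        A (Sum.inl a) (Sum.inr u)
          = (if head e = u.1 then 1 else 0) - (if tail e = u.1 then 1 else 0))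
    (hzero : ∀ w u, A (Sum.inr w) (Sum.inr u) = 0) :
    A.det = 0 := by
  classical
  set W : Set V := {v | ¬ MGReach head tail Sᶜ v v₀} with hWdef
  have hv₀ : v₀ ∉ W := by
    simp only [W, Set.mem_setOf_eq, not_not]
    exact Relation.ReflTransGen.refl
  have hsym : Symmetric (MGAdj head tail Sᶜ) := by
    rintro a b ⟨e, he, h | h⟩
    exacts [⟨e, he, Or.inr h⟩, ⟨e, he, Or.inl h⟩]
  obtain ⟨u₁, hu₁⟩ : ∃ u, u ∈ W := by
    by_contra hcon
    push_neg at hcon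
    apply hcut
    intro u w
    have hu : MGReach head tail Sᶜ u v₀ := not_not.mp (hcon u)
    have hw : MGReach head tail Sᶜ w v₀ := not_not.mp (hcon w)
    haveI : Std.Symm (MGAdj head tail Sᶜ) := ⟨hsym⟩
    exact hu.trans (Std.Symm.symm (r := Relation.ReflTransGen (MGAdj head tail Sᶜ)) _ _ hw)
  have hW : ∀ e ∉ S, (head e ∈ W ↔ tail e ∈ W) := by
    intro e he
    constructor <;> intro hm hr <;> apply hm
    · exact Relation.ReflTransGen.head ⟨e, he, Or.inl ⟨rfl, rfl⟩⟩ hr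
    · exact Relation.ReflTransGen.head ⟨e, he, Or.inr ⟨rfl, rfl⟩⟩ hr
  set c : (α ⊕ {u : V // u ≠ v₀}) → MvPolynomial E ℚ :=
    Sum.elim (fun _ => 0) (fun u => if u.1 ∈ W then 1 else 0) with hc
  have hsum : ∀ x : V,
      (∑ u : {u : V // u ≠ v₀},
        (if x = u.1 then (1 : MvPolynomial E ℚ) else 0) * (if u.1 ∈ W then 1 else 0))
        = if x ∈ W then 1 else 0 := by
    intro x
    by_cases hxv : x = v₀
    · subst hxv
      rw [if_neg hv₀]
      apply Finset.sum_eq_zero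
      rintro ⟨u, hu⟩ -
      rw [if_neg (fun h => hu h.symm), zero_mul]
    · rw [Fintype.sum_eq_single ⟨x, hxv⟩ ?_]
      · simp
      · rintro ⟨u, hu⟩ hne'
        rw [if_neg, zero_mul]
        intro h
        exact hne' (Subtype.ext h.symm)
  have hAc : A.mulVec c = 0 := by
    funext r
    simp only [Matrix.mulVec, dotProduct, Pi.zero_apply]
    rw [Fintype.sum_sum_type]
    cases r with
    | inr w => simp [hc, hzero]
    | inl a =>
      rcases hrow a with h | ⟨e, heS, hA⟩
      · simp [hc, h]
      · simp only [hc, Sum.elim_inl, Sum.elim_inr, mul_zero, Finset.sum_const_zero, zero_add, hA]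
        simp only [sub_mul, Finset.sum_sub_distrib, hsum (head e), hsum (tail e)]
        by_cases ht : tail e ∈ W
        · rw [if_pos ((hW e heS).mpr ht), if_pos ht, sub_self]
        · rw [if_neg (fun hh => ht ((hW e heS).mp hh)), if_neg ht, sub_self]
  have h2 : A.det • c = 0 := by
    have h3 := congrArg (fun x => Matrix.mulVec (Matrix.adjugate A) x) hAc
    simpa [Matrix.mulVec_mulVec, Matrix.adjugate_mul, Matrix.smul_mulVec,
      Matrix.one_mulVec, Matrix.mulVec_zero] using h3
  have hne1 : u₁ ≠ v₀ := fun h => hv₀ (h ▸ hu₁)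
  have h4 := congrFun h2 (Sum.inr ⟨u₁, hne1⟩)
  simpa [hc, hu₁] using h4

set_option maxHeartbeats 1000000 in
/-- If `{i,j,k}` is a 3-edge cut set of the connected graph `G` and `{i,j,k} ⊆ I`,
then `Ψ^{I,J}_{G,K} = 0`.  Consequently, if `{i,j} ⊆ I` and `k ∉ I ∪ J ∪ K`, then
`Ψ^{I,J}_{G,K}` is independent of the variable `a_k` (it is unchanged by setting
`a_k = 0`). -/
theorem dodgson_cut_set {V E : Type*} [Fintype V] [Fintype E]
    [DecidableEq V] [DecidableEq E] (head tail : E → V)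
    (hconn : ∀ u w : V, MGReach head tail Set.univ u w)
    (v₀ : V) (i j k : E)
    (hcut : ¬ ∀ u w : V, MGReach head tail ({i, j, k} : Set E)ᶜ u w) :
    (∀ (I J K : Finset E) (h : I.card = J.card),
      i ∈ I → j ∈ I → k ∈ I → dodgson head tail v₀ I J K h = 0) ∧
    (∀ (I J K : Finset E) (h : I.card = J.card),
      i ∈ I → j ∈ I → k ∉ I → k ∉ J → k ∉ K →
        MvPolynomial.bind₁
            (fun e => if e = k then 0 else (MvPolynomial.X e : MvPolynomial E ℚ))
            (dodgson head tail v₀ I J K h) =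
          dodgson head tail v₀ I J K h) := by
  classical
  constructor
  · intro I J K h hiI hjI hkI
    unfold dodgson
    have hz : Matrix.det (Matrix.of
        fun (r c : {e : E // e ∉ I} ⊕ {u : V // u ≠ v₀}) =>
          bigM head tail v₀ (Sum.map Subtype.val id r)
            (Sum.map (fun x => ((notMemEquiv I J h x : {e : E // e ∉ J}) : E)) id c)) = 0 := by
      apply keyDetZero hcut
      swap
      · intro w u
        simp [bigM]
      intro a
      refine Or.inr ⟨a.1, ?_, ?_⟩
      · intro hmem
        simp only [Set.mem_insert_iff, Set.mem_singleton_iff] at hmem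
        rcases hmem with rfl | rfl | rfl
        exacts [a.2 hiI, a.2 hjI, a.2 hkI]
      · intro u
        simp [bigM, redInc]
    rw [hz, map_zero]
  · intro I J K hc hiI hjI hkI hkJ hkK
    unfold dodgson
    set σ := notMemEquiv I J hc with hσ
    set N : Matrix ({e : E // e ∉ I} ⊕ {u : V // u ≠ v₀})
        ({e : E // e ∉ I} ⊕ {u : V // u ≠ v₀}) (MvPolynomial E ℚ) :=
      Matrix.of fun r c =>
        bigM head tail v₀ (Sum.map Subtype.val id r)
          (Sum.map (fun x => ((σ x : {e : E // e ∉ J}) : E)) id c) with hNdef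
    set r₀ : {e : E // e ∉ I} ⊕ {u : V // u ≠ v₀} := Sum.inl ⟨k, hkI⟩ with hr₀def
    set c₀ : {e : E // e ∉ I} ⊕ {u : V // u ≠ v₀} := Sum.inl (σ.symm ⟨k, hkJ⟩) with hc₀def
    set v : ({e : E // e ∉ I} ⊕ {u : V // u ≠ v₀}) → MvPolynomial E ℚ :=
      Sum.elim (fun _ => 0)
        (fun u => (if head k = u.1 then 1 else 0) - (if tail k = u.1 then 1 else 0)) with hvdef
    set ps : ({e : E // e ∉ I} ⊕ {u : V // u ≠ v₀}) → MvPolynomial E ℚ :=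
      Pi.single c₀ 1 with hps
    have hrow0 : N r₀ = (MvPolynomial.X k : MvPolynomial E ℚ) • ps + v := by
      funext x
      cases x with
      | inl b =>
        by_cases hb : σ b = ⟨k, hkJ⟩
        · have hb' : b = σ.symm ⟨k, hkJ⟩ := by rw [← hb, Equiv.symm_apply_apply]
          simp [hNdef, hr₀def, hc₀def, hvdef, hps, bigM, Matrix.diagonal, hb, hb',
            Pi.single_apply]
        · have h1 : ¬ (k = ((σ b : {e : E // e ∉ J}) : E)) := by
            intro hk
            exact hb (Subtype.ext hk.symm)
          have h2 : (Sum.inl b : {e : E // e ∉ I} ⊕ {u : V // u ≠ v₀}) ≠ c₀ := by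
            rw [hc₀def]
            intro hk
            apply hb
            have : b = σ.symm ⟨k, hkJ⟩ := by injection hk
            rw [this, Equiv.apply_symm_apply]
          simp [hNdef, hr₀def, hvdef, hps, bigM, Matrix.diagonal, h1, Pi.single_apply, h2]
      | inr u =>
        simp [hNdef, hr₀def, hc₀def, hvdef, hps, bigM, redInc, Pi.single_apply]
    have hB : (N.updateRow r₀ ps).det = 0 := by
      refine keyDetZero hcut _ ?_ ?_
      · intro a
        by_cases ha : a = (⟨k, hkI⟩ : {e : E // e ∉ I})
        · refine Or.inl fun u => ?_
          subst ha
          rw [show (Sum.inl (⟨k, hkI⟩ : {e : E // e ∉ I})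
              : {e : E // e ∉ I} ⊕ {u : V // u ≠ v₀}) = r₀ from rfl]
          rw [Matrix.updateRow_self]
          simp [hps, hc₀def, Pi.single_apply]
        · refine Or.inr ⟨a.1, ?_, fun u => ?_⟩
          · intro hmem
            simp only [Set.mem_insert_iff, Set.mem_singleton_iff] at hmem
            rcases hmem with rfl | rfl | rfl
            exacts [a.2 hiI, a.2 hjI, ha (Subtype.ext rfl)]
          · rw [Matrix.updateRow_ne (by simp [hr₀def, ha] : (Sum.inl a : _) ≠ r₀)]
            simp [hNdef, bigM, redInc]
      · intro w u
        rw [Matrix.updateRow_ne (by simp [hr₀def] : (Sum.inr w : _) ≠ r₀)]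
        simp [hNdef, bigM]
    have hNC : N.det = (N.updateRow r₀ v).det := by
      conv_lhs => rw [← Matrix.updateRow_eq_self N r₀, hrow0]
      rw [Matrix.det_updateRow_add, Matrix.det_updateRow_smul, hB, mul_zero, zero_add]
    rw [hNC]
    set C := N.updateRow r₀ v with hCdef
    set F₁ := (MvPolynomial.bind₁
      (fun i => if i ∈ K then 0 else (MvPolynomial.X i : MvPolynomial E ℚ))) with hF₁
    set F₂ := (MvPolynomial.bind₁
      (fun e => if e = k then 0 else (MvPolynomial.X e : MvPolynomial E ℚ))) with hF₂
    have gX : ∀ e : E, e ≠ k → F₂ (F₁ (MvPolynomial.X e)) = F₁ (MvPolynomial.X e) := by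
      intro e he
      by_cases heK : e ∈ K <;>
        simp [hF₁, hF₂, MvPolynomial.bind₁_X_right, heK, he]
    have key2 : ∀ r c, F₂ (F₁ (C r c)) = F₁ (C r c) := by
      have hconst : ∀ (P Q : Prop) (dP : Decidable P) (dQ : Decidable Q),
          F₂ (F₁ ((if P then 1 else 0) - (if Q then (1 : MvPolynomial E ℚ) else 0)))
            = F₁ ((if P then 1 else 0) - (if Q then 1 else 0)) := by
        intro P Q dP dQ
        split_ifs <;> simp
      rintro (a | w) (b | u)
      · -- edge-edge
        by_cases ha : a = (⟨k, hkI⟩ : {e : E // e ∉ I})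
        · subst ha
          have : C (Sum.inl ⟨k, hkI⟩) (Sum.inl b) = 0 := by
            rw [hCdef, show (Sum.inl (⟨k, hkI⟩ : {e : E // e ∉ I}) : _) = r₀ from rfl,
              Matrix.updateRow_self]
            simp [hvdef]
          rw [this]; simp
        · have hC : C (Sum.inl a) (Sum.inl b)
              = if a.1 = ((σ b : {e : E // e ∉ J}) : E) then MvPolynomial.X a.1 else 0 := by
            rw [hCdef, Matrix.updateRow_ne (by simp [hr₀def, ha] : (Sum.inl a : _) ≠ r₀)]
            simp [hNdef, bigM, Matrix.diagonal]
          rw [hC]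
          split_ifs with hh
          · exact gX a.1 (fun hk => ha (Subtype.ext hk))
          · simp
      · -- edge-vertex
        by_cases ha : a = (⟨k, hkI⟩ : {e : E // e ∉ I})
        · subst ha
          have : C (Sum.inl ⟨k, hkI⟩) (Sum.inr u)
              = (if head k = u.1 then 1 else 0) - (if tail k = u.1 then 1 else 0) := by
            rw [hCdef, show (Sum.inl (⟨k, hkI⟩ : {e : E // e ∉ I}) : _) = r₀ from rfl,
              Matrix.updateRow_self]
            simp [hvdef]
          rw [this]; exact hconst _ _ _ _
        · have : C (Sum.inl a) (Sum.inr u)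
              = (if head a.1 = u.1 then 1 else 0) - (if tail a.1 = u.1 then 1 else 0) := by
            rw [hCdef, Matrix.updateRow_ne (by simp [hr₀def, ha] : (Sum.inl a : _) ≠ r₀)]
            simp [hNdef, bigM, redInc]
          rw [this]; exact hconst _ _ _ _
      · -- vertex-edge
        have : C (Sum.inr w) (Sum.inl b)
            = -((if head ((σ b : {e : E // e ∉ J}) : E) = w.1 then 1 else 0)
              - (if tail ((σ b : {e : E // e ∉ J}) : E) = w.1 then 1 else 0)) := by
          rw [hCdef, Matrix.updateRow_ne (by simp [hr₀def] : (Sum.inr w : _) ≠ r₀)]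
          simp [hNdef, bigM, redInc]
        simp only [this, map_neg]
        exact congrArg Neg.neg (hconst _ _ _ _)
      · -- vertex-vertex
        have : C (Sum.inr w) (Sum.inr u) = 0 := by
          rw [hCdef, Matrix.updateRow_ne (by simp [hr₀def] : (Sum.inr w : _) ≠ r₀)]
          simp [hNdef, bigM]
        rw [this]; simp
    rw [AlgHom.map_det, AlgHom.map_det]
    congr 1
    refine Matrix.ext fun r c => ?_
    simp only [AlgHom.mapMatrix_apply, Matrix.map_apply]
    exact key2 r c
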